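/- For β > 1, the equation m = tanh(βm) has a unique positive solution m_β ∈ (0,1), and the value m*(β) := √(1 - 1/β) satisfies 0 < m*(β) < m_β < 1. -/

import Mathlib

lemma tanh_eq_exp (y : ℝ) :
    Real.tanh y = (Real.exp (2*y) - 1) / (Real.exp (2*y) + 1) := by
  have h := Real.exp_ne_zero y
  have h2 : Real.exp (2*y) = Real.exp y * Real.exp y := by
    rw [two_mul, Real.exp_add]
  have hpos : (0:ℝ) < Real.exp (2*y) + 1 := by positivity
  rw [Real.tanh_eq_sinh_div_cosh, Real.sinh_eq, Real.cosh_eq, h2, Real.exp_neg]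
  field_simp

lemma tanh_lt_one (y : ℝ) : Real.tanh y < 1 := by
  rw [tanh_eq_exp]
  have hpos : (0:ℝ) < Real.exp (2*y) + 1 := by positivity
  rw [div_lt_one hpos]; linarith

lemma key_iff (β m : ℝ) (hm0 : 0 < m) (hm1 : m < 1) :
    m = Real.tanh (β * m) ↔
      Real.log (1+m) - Real.log (1-m) - 2*β*m = 0 := by
  set E := Real.exp (2*(β*m)) with hE
  have hEpos : 0 < E := Real.exp_pos _
  have h1m : (0:ℝ) < 1 - m := by linarith
  have h1p : (0:ℝ) < 1 + m := by linarith
  have hq : (0:ℝ) < (1+m)/(1-m) := by positivity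
  have step1 : m = Real.tanh (β*m) ↔ E = (1+m)/(1-m) := by
    rw [tanh_eq_exp, ← hE]
    rw [eq_div_iff (ne_of_gt h1m)]
    constructor
    · intro h
      have : m * (E+1) = E - 1 := by
        field_simp at h
        linarith [h]
      nlinarith
    · intro h
      have : m * (E+1) = E - 1 := by nlinarith
      rw [eq_div_iff (by positivity : E + 1 ≠ 0)]
      linarith
  rw [step1]
  constructor
  · intro h
    have := congrArg Real.log h
    rw [Real.log_exp, Real.log_div (ne_of_gt h1p) (ne_of_gt h1m)] at this
    linarith
  · intro h
    have h2 : 2*(β*m) = Real.log ((1+m)/(1-m)) := by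
      rw [Real.log_div (ne_of_gt h1p) (ne_of_gt h1m)]; linarith
    rw [hE, h2, Real.exp_log hq]

lemma g_hasDeriv (β m : ℝ) (hm1 : -1 < m) (hm2 : m < 1) :
    HasDerivAt (fun x => Real.log (1+x) - Real.log (1-x) - 2*β*x)
      ((1+m)⁻¹ + (1-m)⁻¹ - 2*β) m := by
  have h1 : HasDerivAt (fun x : ℝ => 1 + x) 1 m := by
    simpa using (hasDerivAt_id m).const_add 1
  have h2 : HasDerivAt (fun x : ℝ => 1 - x) (-1) m := by
    simpa using (hasDerivAt_id m).const_sub 1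
  have hl1 : HasDerivAt (fun x => Real.log (1+x)) ((1+m)⁻¹ * 1) m :=
    (Real.hasDerivAt_log (by linarith)).comp m h1
  have hl2 : HasDerivAt (fun x => Real.log (1-x)) ((1-m)⁻¹ * (-1)) m :=
    (Real.hasDerivAt_log (by linarith)).comp m h2
  have h3 : HasDerivAt (fun x : ℝ => 2*β*x) (2*β) m := by
    simpa using (hasDerivAt_id m).const_mul (2*β)
  have : HasDerivAt (fun x => Real.log (1+x) - Real.log (1-x) - 2*β*x)
      ((1+m)⁻¹ * 1 - (1-m)⁻¹ * (-1) - 2*β) m := (hl1.sub hl2).sub h3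
  convert this using 1
  ring

/-- For `β > 1` the equation `m = tanh (β m)` has a unique positive solution
`m_β`, it lies in `(0,1)`, and `m*(β) = √(1-1/β)` satisfies
`0 < m*(β) < m_β < 1`. -/
theorem spontaneous_magnetization (β : ℝ) (hβ : 1 < β) :
    (∃! m : ℝ, 0 < m ∧ m = Real.tanh (β * m)) ∧
    (∀ m : ℝ, 0 < m → m = Real.tanh (β * m) →
      0 < Real.sqrt (1 - 1/β) ∧ Real.sqrt (1 - 1/β) < m ∧ m < 1) := by
  have hβ0 : (0:ℝ) < β := by linarith
  have hu : (0:ℝ) < 1 - 1/β := by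
    have : 1/β < 1 := by rw [div_lt_one hβ0]; exact hβ
    linarith
  set t := Real.sqrt (1 - 1/β) with htdef
  have ht0 : 0 < t := Real.sqrt_pos.mpr hu
  have htsq : t^2 = 1 - 1/β := Real.sq_sqrt (le_of_lt hu)
  have ht1 : t < 1 := by
    nlinarith [htsq, one_div_pos.mpr hβ0]
  set g : ℝ → ℝ := fun x => Real.log (1+x) - Real.log (1-x) - 2*β*x with hgdef
  have hg0 : g 0 = 0 := by simp [hgdef]
  -- strictly decreasing on [0,t]
  have hanti : StrictAntiOn g (Set.Icc 0 t) := by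
    apply strictAntiOn_of_deriv_neg (convex_Icc 0 t)
    · intro x hx
      exact (g_hasDeriv β x (by linarith [hx.1]) (by linarith [hx.2, ht1])).continuousAt.continuousWithinAt
    · intro x hx
      rw [interior_Icc] at hx
      obtain ⟨hx0, hxt⟩ := hx
      have h1m : (0:ℝ) < 1 - x := by linarith
      have h1p : (0:ℝ) < 1 + x := by linarith
      rw [(g_hasDeriv β x (by linarith) (by linarith)).deriv]
      have hsum : (1+x)⁻¹ + (1-x)⁻¹ = 2/(1-x^2) := by
        have hne : (1-x^2) ≠ 0 := by nlinarith
        field_simp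
        ring
      have hx2 : 1 - x^2 > 1/β := by nlinarith [htsq]
      have : 2/(1-x^2) < 2*β := by
        rw [div_lt_iff₀ (by nlinarith)]
        have : 1/β * β = 1 := by field_simp
        nlinarith
      linarith [hsum ▸ this]
  -- strictly increasing on [t,1)
  have hmono : StrictMonoOn g (Set.Ico t 1) := by
    apply strictMonoOn_of_deriv_pos (convex_Ico t 1)
    · intro x hx
      exact (g_hasDeriv β x (by linarith [hx.1]) (by linarith [hx.2])).continuousAt.continuousWithinAt
    · intro x hx
      rw [interior_Ico] at hx
      obtain ⟨hxt, hx1⟩ := hx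
      have h1m : (0:ℝ) < 1 - x := by linarith
      have h1p : (0:ℝ) < 1 + x := by linarith [ht0]
      rw [(g_hasDeriv β x (by linarith [ht0]) (by linarith)).deriv]
      have hsum : (1+x)⁻¹ + (1-x)⁻¹ = 2/(1-x^2) := by
        have hne : (1-x^2) ≠ 0 := by nlinarith
        field_simp
        ring
      have hx2 : 1 - x^2 < 1/β := by nlinarith [htsq]
      have hx2pos : (0:ℝ) < 1 - x^2 := by nlinarith
      have : 2*β < 2/(1-x^2) := by
        rw [lt_div_iff₀ hx2pos]
        have : 1/β * β = 1 := by field_simp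
        nlinarith
      linarith [hsum ▸ this]
  -- g t < 0
  have hgt : g t < 0 := by
    have := hanti (Set.left_mem_Icc.mpr (le_of_lt ht0)) (Set.right_mem_Icc.mpr (le_of_lt ht0)) ht0
    rw [hg0] at this; exact this
  -- every positive solution lies in (t, 1)
  have hsol : ∀ m : ℝ, 0 < m → m = Real.tanh (β * m) → t < m ∧ m < 1 := by
    intro m hm0 hm
    have hm1 : m < 1 := hm ▸ tanh_lt_one (β*m)
    have hgm : g m = 0 := (key_iff β m hm0 hm1).mp hm
    refine ⟨?_, hm1⟩
    by_contra hle
    push_neg at hle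
    have := hanti (Set.left_mem_Icc.mpr (le_of_lt ht0)) ⟨le_of_lt hm0, hle⟩ hm0
    rw [hg0, hgm] at this
    exact absurd this (lt_irrefl 0)
  -- existence: pick b with g b > 0
  set b := 1 - Real.exp (-(2*β+1)) with hbdef
  have heb : Real.exp (-(2*β+1)) < 1/(2*β) := by
    rw [Real.exp_neg, inv_lt_comm₀ (Real.exp_pos _) (by positivity), one_div, inv_inv]
    have := Real.add_one_le_exp (2*β+1); linarith
  have htb : t < b := by
    have h2 : t ≤ 1 - 1/(2*β) := by
      have h3 : (1 - 1/(2*β))^2 ≥ 1 - 1/β := by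
        have : 1/(2*β) = (1/β)/2 := by ring
        nlinarith [sq_nonneg (1/(2*β))]
      have h4 : (0:ℝ) ≤ 1 - 1/(2*β) := by
        have : 1/(2*β) < 1 := by rw [div_lt_one (by linarith)]; linarith
        linarith
      calc t = Real.sqrt (1-1/β) := htdef
      _ ≤ Real.sqrt ((1 - 1/(2*β))^2) := Real.sqrt_le_sqrt (by nlinarith)
      _ = 1 - 1/(2*β) := Real.sqrt_sq h4
    have : 1 - 1/(2*β) < b := by
      rw [hbdef]; have := heb; linarith
    linarith
  have hb1 : b < 1 := by
    have := Real.exp_pos (-(2*β+1)); rw [hbdef]; linarith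
  have hgb : 0 < g b := by
    have h1b : 1 - b = Real.exp (-(2*β+1)) := by rw [hbdef]; ring
    have hlogb : Real.log (1-b) = -(2*β+1) := by rw [h1b, Real.log_exp]
    have hb0 : 0 < b := lt_trans ht0 htb
    have hlog1b : 0 ≤ Real.log (1+b) := Real.log_nonneg (by linarith)
    have : 2*β*b < 2*β := by nlinarith
    simp only [hgdef, hlogb]
    linarith
  -- intermediate value on [t, b]
  have hcont : ContinuousOn g (Set.Icc t b) := by
    intro x hx
    exact (g_hasDeriv β x (by linarith [hx.1, ht0]) (by linarith [hx.2, hb1])).continuousAt.continuousWithinAt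
  have hivt : (0:ℝ) ∈ g '' (Set.Ioo t b) := by
    apply intermediate_value_Ioo (le_of_lt htb) hcont
    exact ⟨hgt, hgb⟩
  obtain ⟨m₀, hm₀mem, hm₀⟩ := hivt
  have hm₀0 : 0 < m₀ := lt_trans ht0 hm₀mem.1
  have hm₀1 : m₀ < 1 := lt_trans hm₀mem.2 hb1
  have hm₀sol : m₀ = Real.tanh (β * m₀) := (key_iff β m₀ hm₀0 hm₀1).mpr hm₀
  constructor
  · refine ⟨m₀, ⟨hm₀0, hm₀sol⟩, ?_⟩
    rintro m ⟨hm0, hm⟩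
    obtain ⟨htm, hm1⟩ := hsol m hm0 hm
    have hgm : g m = 0 := (key_iff β m hm0 hm1).mp hm
    exact hmono.injOn ⟨le_of_lt htm, hm1⟩ ⟨le_of_lt hm₀mem.1, hm₀1⟩ (by rw [hgm, hm₀])
  · intro m hm0 hm
    obtain ⟨htm, hm1⟩ := hsol m hm0 hm
    exact ⟨ht0, htm, hm1⟩
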